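/- Let R be a unique factorization domain, let F be a free R-module, and let P ⊆ F be a submodule which is itself free (i.e., P admits an R-basis). Let x ∈ F and let a, c ∈ R be relatively prime elements (they have no common prime divisor). If a·x ∈ P and c·x ∈ P, then x ∈ P. -/

import Mathlib

/-- key step of Lemma 6.2 of the paper. Let `R` be a UFD, `F` a free
`R`-module, and `P ⊆ F` a submodule which is itself free (it admits an `R`-basis).
If `x ∈ F` and `a, c ∈ R` are relatively prime with `a·x ∈ P` and `c·x ∈ P`,
then `x ∈ P`. -/
theorem mem_of_relPrime_smul_mem (R : Type*) [CommRing R] [IsDomain R]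
    [UniqueFactorizationMonoid R]
    (F : Type*) [AddCommGroup F] [Module R F] [Module.Free R F]
    (P : Submodule R F) (ι : Type*) (b : Module.Basis ι R ↥P)
    (x : F) (a c : R) (hac : IsRelPrime a c)
    (hax : a • x ∈ P) (hcx : c • x ∈ P) : x ∈ P := by
  by_cases ha : a = 0
  · subst ha
    have hc : IsUnit c := isRelPrime_zero_left.mp hac
    obtain ⟨u, rfl⟩ := hc
    have : ((u⁻¹ : Rˣ) : R) • ((u : R) • x) ∈ P := P.smul_mem _ hcx
    simpa [smul_smul] using this
  · set u : P := ⟨a • x, hax⟩ with hu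
    set v : P := ⟨c • x, hcx⟩ with hv
    have hkey : c • u = a • v := by
      apply Subtype.ext
      simp [hu, hv, smul_smul, mul_comm]
    have hdvd : ∀ i, a ∣ b.repr u i := by
      intro i
      have h1 : c * b.repr u i = a * b.repr v i := by
        have := congrArg (fun p => b.repr p i) hkey
        simpa [mul_comm] using this
      exact hac.dvd_of_dvd_mul_left ⟨b.repr v i, h1⟩
    classical
    set w : ι →₀ R := (b.repr u).mapRange (fun r => if h : a ∣ r then h.choose else 0)
      (by simp only [dif_pos (dvd_zero a)]
          exact (mul_right_cancel₀ ha (by rw [zero_mul, mul_comm]; exact (dvd_zero a).choose_spec.symm)))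
      with hw
    set z : P := b.repr.symm w with hz
    have haw : a • w = b.repr u := by
      ext i
      have h := hdvd i
      simp only [hw, Finsupp.smul_apply, Finsupp.mapRange_apply, dif_pos h, smul_eq_mul]
      exact (h.choose_spec).symm
    have hazu : a • z = u := by
      apply b.repr.injective
      rw [map_smul, hz, b.repr.apply_symm_apply, haw]
    have : a • (z : F) = a • x := by
      have := congrArg (Subtype.val) hazu
      simpa using this
    have hx : (z : F) = x := smul_right_injective F ha this
    exact hx ▸ z.2
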